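/- A ring R is right cP-Baer if and only if the formal power series ring R[[x]] is right cP-Baer. -/

import Mathlib

open PowerSeries

/-- A ring `S` is right 𝔠𝔓-Baer if for every idempotent `e` of `S` there exists an
idempotent `c` with `r_S(eS) = cS`. -/
def IsRightCPBaer (S : Type*) [Ring S] : Prop :=
  ∀ e : S, e * e = e → ∃ c : S, c * c = c ∧
    ∀ a : S, (∀ r : S, e * r * a = 0) ↔ ∃ r : S, a = c * r

section Aux

variable {R : Type*} [Ring R]

/-- Transfer of the annihilator condition for constant idempotents. -/
lemma cpbaer_const (e c : R) (hc : c * c = c)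
    (h : ∀ a : R, (∀ r : R, e * r * a = 0) ↔ ∃ r : R, a = c * r) :
    ∀ A : R⟦X⟧, (∀ F : R⟦X⟧, C e * F * A = 0) ↔ ∃ G : R⟦X⟧, A = C c * G := by
  intro A
  constructor
  · intro hA
    refine ⟨A, ?_⟩
    ext n
    rw [coeff_C_mul]
    have key : ∀ r : R, e * r * (coeff n A) = 0 := by
      intro r
      have := hA (C r)
      have h2 : (coeff n) (C e * C r * A) = 0 := by rw [this]; simp
      rw [mul_assoc, coeff_C_mul, coeff_C_mul, ← mul_assoc] at h2
      exact h2
    obtain ⟨s, hs⟩ := (h _).1 key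
    rw [hs, ← mul_assoc, hc]
  · rintro ⟨G, rfl⟩ F
    have key : ∀ r : R, e * r * c = 0 := (h c).2 ⟨c, hc.symm⟩
    ext n
    rw [mul_assoc, coeff_C_mul, ← mul_assoc, coeff_mul, Finset.mul_sum]
    rw [map_zero]
    apply Finset.sum_eq_zero
    rintro ⟨i, j⟩ _
    rw [coeff_mul_C]
    have : e * ((coeff i) F * c) = 0 := by
      rw [← mul_assoc]; exact key _
    rw [← mul_assoc, this, zero_mul]

/-- For an idempotent power series `E`, the left annihilator condition agrees with that of
the constant power series on its constant coefficient. -/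
lemma ann_eq_const (E : R⟦X⟧) (hE : E * E = E) (A : R⟦X⟧) :
    (∀ F : R⟦X⟧, E * F * A = 0) ↔
      (∀ F : R⟦X⟧, C (constantCoeff E) * F * A = 0) := by
  set e : R⟦X⟧ := C (constantCoeff E) with he
  have hee : e * e = e := by
    rw [he, ← map_mul, ← map_mul, hE]
  set v : R⟦X⟧ := e * E + (1 - e) * (1 - E) with hv
  have hv1 : e * v = e * E := by
    have h0 : e * (1 - e) = 0 := by rw [mul_sub, mul_one, hee, sub_self]
    rw [hv, mul_add, ← mul_assoc, hee, ← mul_assoc, h0, zero_mul, add_zero]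
  have hv2 : v * E = e * E := by
    have h0 : (1 - E) * E = 0 := by rw [sub_mul, one_mul, hE, sub_self]
    rw [hv, add_mul, mul_assoc, hE, mul_assoc, h0, mul_zero, add_zero]
  have hvu : IsUnit v := by
    rw [isUnit_iff_constantCoeff]
    set e0 : R := constantCoeff E with he0
    have hEc : e0 * e0 = e0 := by
      rw [he0, ← map_mul, hE]
    have h1 : (constantCoeff) v = e0 * e0 + (1 - e0) * (1 - e0) := by
      simp [hv, he, ← he0]
    have expand : e0 * e0 + (1 - e0) * (1 - e0) = e0 * e0 + e0 * e0 + 1 - e0 - e0 := by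
      noncomm_ring
    rw [h1, expand, hEc]
    have : e0 + e0 + 1 - e0 - e0 = 1 := by abel
    rw [this]; exact isUnit_one
  obtain ⟨u, hu⟩ := hvu
  have hEv : e * v = v * E := hv1.trans hv2.symm
  constructor
  · intro hA F
    have key : e * F = v * (E * (↑u⁻¹ * F)) := by
      calc e * F = e * (v * (↑u⁻¹ * F)) := by
              rw [← hu, ← mul_assoc (↑u : R⟦X⟧), Units.mul_inv, one_mul]
        _ = (e * v) * (↑u⁻¹ * F) := by rw [mul_assoc]
        _ = (v * E) * (↑u⁻¹ * F) := by rw [hEv]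
        _ = v * (E * (↑u⁻¹ * F)) := by rw [mul_assoc]
    rw [key, mul_assoc, hA, mul_zero]
  · intro hA F
    have h1 : v * (E * F * A) = 0 := by
      rw [← mul_assoc, ← mul_assoc, hEv.symm, mul_assoc e v F]
      exact hA (v * F)
    calc E * F * A = ↑u⁻¹ * (v * (E * F * A)) := by
          rw [← mul_assoc, ← hu, Units.inv_mul, one_mul]
      _ = 0 := by rw [h1, mul_zero]

end Aux

/-- A ring `R` is right 𝔠𝔓-Baer iff the formal power series ring `R[[x]]` is right 𝔠𝔓-Baer. -/
theorem isRightCPBaer_iff_powerSeries {R : Type*} [Ring R] :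
    IsRightCPBaer R ↔ IsRightCPBaer (PowerSeries R) := by
  constructor
  · intro hR E hE
    obtain ⟨c, hc, hcr⟩ := hR (constantCoeff E) (by rw [← map_mul, hE])
    refine ⟨C c, by rw [← map_mul, hc], fun A => ?_⟩
    rw [ann_eq_const E hE A]
    exact cpbaer_const _ c hc hcr A
  · intro hS e he
    obtain ⟨Cc, hCc, hCcr⟩ := hS (C e) (by rw [← map_mul, he])
    set c : R := constantCoeff Cc with hcdef
    have hc : c * c = c := by
      rw [hcdef, ← map_mul, hCc]
    refine ⟨c, hc, fun a => ?_⟩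
    constructor
    · intro ha
      have : ∀ F : R⟦X⟧, C e * F * C a = 0 := by
        intro F
        ext n
        rw [mul_assoc, coeff_C_mul, coeff_mul_C, ← mul_assoc, map_zero]
        exact ha _
      obtain ⟨G, hG⟩ := (hCcr (C a)).1 this
      refine ⟨constantCoeff G, ?_⟩
      have := congrArg (constantCoeff) hG
      rwa [map_mul, constantCoeff_C] at this
    · rintro ⟨r, rfl⟩ s
      have h0 : ∀ F : R⟦X⟧, C e * F * Cc = 0 :=
        (hCcr Cc).2 ⟨1, (mul_one Cc).symm⟩
      have := congrArg (constantCoeff) (h0 (C s))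
      rw [map_mul, map_mul, constantCoeff_C, constantCoeff_C, map_zero] at this
      rw [← mul_assoc, mul_assoc _ s c, ← mul_assoc e s c, this, zero_mul]
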